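/- The function A(θ) = cos((π/2)·cos θ)/sin θ is strictly monotonically decreasing on (π/2, π). -/

import Mathlib

open Real Set

theorem dipole_pattern_strictAntiOn :
    StrictAntiOn (fun θ : ℝ => Real.cos (π/2 * Real.cos θ) / Real.sin θ)
      (Ioo (π/2) π) := by
  have hpi := Real.pi_pos
  apply strictAntiOn_of_deriv_neg (convex_Ioo _ _)
  · apply ContinuousOn.div
    · exact (Real.continuous_cos.comp (continuous_const.mul Real.continuous_cos)).continuousOn
    · exact Real.continuous_sin.continuousOn
    · intro x hx
      exact ne_of_gt (Real.sin_pos_of_pos_of_lt_pi (by linarith [hx.1]) hx.2)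
  · intro θ hθ
    rw [interior_Ioo] at hθ
    obtain ⟨h1, h2⟩ := hθ
    have hs : 0 < Real.sin θ := Real.sin_pos_of_pos_of_lt_pi (by linarith) h2
    have hc1 : Real.cos θ < 0 :=
      Real.cos_neg_of_pi_div_two_lt_of_lt h1 (by linarith)
    have hc2 : -1 < Real.cos θ := by
      have := Real.cos_lt_cos_of_nonneg_of_le_pi (by linarith : (0:ℝ) ≤ θ) le_rfl h2
      rwa [Real.cos_pi] at this
    have hd1 : HasDerivAt (fun x => Real.cos (π/2 * Real.cos x))
        (-Real.sin (π/2 * Real.cos θ) * (π/2 * -Real.sin θ)) θ :=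
      (Real.hasDerivAt_cos _).comp θ ((Real.hasDerivAt_cos θ).const_mul (π/2))
    have hd : HasDerivAt (fun x => Real.cos (π/2 * Real.cos x) / Real.sin x) _ θ :=
      hd1.div (Real.hasDerivAt_sin θ) (ne_of_gt hs)
    rw [hd.deriv]
    apply div_neg_of_neg_of_pos _ (by positivity)
    -- numerator negative
    set t : ℝ := -Real.cos θ with ht
    clear_value t
    have ht0 : 0 < t := by simp [ht]; linarith
    have ht1 : t < 1 := by simp [ht]; linarith
    have e1 : Real.sin (π/2 * Real.cos θ) = -Real.sin (π/2 * t) := by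
      rw [ht]; rw [show π/2 * -Real.cos θ = -(π/2 * Real.cos θ) by ring, Real.sin_neg]; ring
    have e2 : Real.cos (π/2 * Real.cos θ) = Real.cos (π/2 * t) := by
      rw [ht, show π/2 * -Real.cos θ = -(π/2 * Real.cos θ) by ring, Real.cos_neg]
    have hsin : t ≤ Real.sin (π/2 * t) := by
      have := Real.mul_le_sin (x := π/2 * t) (by positivity)
        (by nlinarith)
      calc t = 2/π * (π/2 * t) := by field_simp
        _ ≤ _ := this
    have hcos : Real.cos (π/2 * t) ≤ π/2 * (1 - t) := by
      have : Real.cos (π/2 * t) = Real.sin (π/2 * (1 - t)) := by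
        rw [show π/2 * (1 - t) = π/2 - π/2 * t by ring, Real.sin_pi_div_two_sub]
      rw [this]
      exact Real.sin_le (by nlinarith)
    have hsq : Real.sin θ ^ 2 = 1 - t ^ 2 := by
      rw [Real.sin_sq]; simp [ht]
    rw [e1, e2]
    have hc : Real.cos θ = -t := by rw [ht]; ring
    rw [hc]
    have hsq' : Real.sin θ * Real.sin θ = 1 - t * t := by nlinarith [hsq]
    have htt : t * t < 1 := by nlinarith
    have key : -(-Real.sin (π/2*t)) * (π/2 * -Real.sin θ) * Real.sin θ - Real.cos (π/2*t) * -t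
        = -(π/2) * (1 - t*t) * Real.sin (π/2*t) + t * Real.cos (π/2*t) := by
      linear_combination (-(π/2) * Real.sin (π/2*t)) * hsq'
    rw [key]
    have hA : π/2 * (1 - t*t) * t ≤ π/2 * (1 - t*t) * Real.sin (π/2*t) :=
      mul_le_mul_of_nonneg_left hsin (mul_nonneg (by positivity) (by linarith))
    have hB : t * Real.cos (π/2*t) ≤ t * (π/2 * (1 - t)) :=
      mul_le_mul_of_nonneg_left hcos ht0.le
    have hC : 0 < π * (t*t) * (1 - t) :=
      mul_pos (mul_pos hpi (mul_pos ht0 ht0)) (by linarith)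
    nlinarith [hA, hB, hC]
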